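/- Let b10 > 0, c01 ≥ 0, and let c11, b11 be real numbers. Then there exists a pair (P11, t) in the feasible set with t < 0 and t > γ' + δ'·P11 (i.e., the positive treatment set contains a pair with negative estimated individual treatment effect) if and only if c11 < b11 − b10. (Theorem 3: the positive treatment set contains pairs (P11, t) with t < 0 if and only if the causal bonus condition is satisfied.) -/

import Mathlib

/-- Theorem 3: the positive treatment set contains pairs (P11, t) with
t < 0 if and only if the causal bonus condition `c11 < b11 - b10` is satisfied. -/
theorem positive_treatment_set_negative_ite_iff
    (b10 c01 c11 b11 : ℝ) (hb : b10 > 0) (hc : c01 ≥ 0) :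
    (∃ P11 t : ℝ, 0 ≤ P11 ∧ P11 ≤ 1 ∧ P11 - 1 ≤ t ∧ t ≤ P11 ∧ t < 0 ∧
        t > c01 / b10 + (b10 - b11 + c11 - c01) / b10 * P11) ↔
      c11 < b11 - b10 := by
  have hb' : b10 ≠ 0 := ne_of_gt hb
  set g : ℝ := c01 / b10 with hg_def
  set d : ℝ := (b10 - b11 + c11 - c01) / b10 with hd_def
  have hg : 0 ≤ g := div_nonneg hc hb.le
  have hgd : g + d = (b10 - b11 + c11) / b10 := by
    rw [hg_def, hd_def, ← add_div]; ring_nf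
  constructor
  · rintro ⟨P, t, hP0, hP1, h1, h2, ht, hgt⟩
    by_contra h
    push_neg at h
    have hs : 0 ≤ g + d := by
      rw [hgd]
      apply div_nonneg _ hb.le
      linarith
    nlinarith [mul_nonneg hs hP0, mul_nonneg hg (sub_nonneg.mpr hP1)]
  · intro h
    have hs : g + d < 0 := by
      rw [hgd]
      apply div_neg_of_neg_of_pos _ hb
      linarith
    set s : ℝ := g + d with hs_def
    set ε : ℝ := min (1/2) (-s / (2 * (|d| + 1))) with hε_def
    have hdabs : 0 ≤ |d| := abs_nonneg d
    have hε_pos : 0 < ε := by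
      apply lt_min (by norm_num)
      apply div_pos (by linarith) (by linarith)
    have hε_half : ε ≤ 1/2 := min_le_left _ _
    have hε2 : ε ≤ -s / (2 * (|d| + 1)) := min_le_right _ _
    have hkey : |d| * ε ≤ -s / 2 := by
      have h1 : |d| * ε ≤ (|d| + 1) * ε := by nlinarith
      have h2 : (|d| + 1) * ε ≤ (|d| + 1) * (-s / (2 * (|d| + 1))) := by
        apply mul_le_mul_of_nonneg_left hε2 (by linarith)
      have h3 : (|d| + 1) * (-s / (2 * (|d| + 1))) = -s / 2 := by
        field_simp
      linarith
    set P : ℝ := 1 - ε with hP_def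
    have hgdP : g + d * P < 0 := by
      have hdP : d * P = d - d * ε := by rw [hP_def]; ring
      have hde : -(d * ε) ≤ |d| * ε := by
        have := neg_abs_le d
        nlinarith
      have : g + d * P = s - d * ε := by rw [hdP, hs_def]; ring
      linarith
    set m : ℝ := max (g + d * P) (P - 1) with hm_def
    have hm_neg : m < 0 := by
      apply max_lt hgdP
      rw [hP_def]; linarith
    clear_value m P ε s d g
    refine ⟨P, m / 2, by rw [hP_def]; linarith, by rw [hP_def]; linarith, ?_, ?_, by linarith, ?_⟩
    · have h1 : P - 1 ≤ m := hm_def ▸ le_max_right _ _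
      linarith
    · have : (0:ℝ) < P := by rw [hP_def]; linarith
      linarith
    · have h1 : g + d * P ≤ m := hm_def ▸ le_max_left _ _
      show g + d * P < m / 2
      linarith
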